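/- Let d ∈ ℕ and 0 < α < d. There exists a constant c₂ > 0, depending only on α and d, such that for every θ ∈ [0,1] and all Lebesgue-measurable sets A, B ⊆ ℝ^d of finite measure, ‖I_α^θ(χ_A, χ_B)‖_{L^{1,∞}(ℝ^d)} ≤ c₂ |A| |B|^{α/d}. -/

import Mathlib

open MeasureTheory ENNReal Metric

lemma ball_finite (d : ℕ) (hd : 0 < d) (α : ℝ) (hα0 : 0 < α) (hαd : α < d) :
    ∫⁻ y in ball (0 : EuclideanSpace ℝ (Fin d)) 1,
      ENNReal.ofReal (‖y‖ ^ (α - (d : ℝ))) < ∞ := by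
  haveI : NeZero d := ⟨hd.ne'⟩
  set E := EuclideanSpace ℝ (Fin d)
  set w : E → ℝ≥0∞ := fun y => ENNReal.ofReal (‖y‖ ^ (α - (d : ℝ))) with hw
  set S : ℕ → Set E := fun k => ball 0 ((1/2 : ℝ) ^ k) \ ball 0 ((1/2 : ℝ) ^ (k+1)) with hS
  have hcover : ball (0 : E) 1 ⊆ {0} ∪ ⋃ k, S k := by
    intro y hy
    rcases eq_or_ne y 0 with rfl | hy0
    · exact Or.inl rfl
    right
    have hny : 0 < ‖y‖ := norm_pos_iff.mpr hy0
    have hlt : ‖y‖ < 1 := by simpa [mem_ball, dist_zero_right] using hy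
    have hex : ∃ n : ℕ, (1/2 : ℝ) ^ (n+1) ≤ ‖y‖ := by
      obtain ⟨n, hn⟩ := exists_pow_lt_of_lt_one hny (by norm_num : (1/2 : ℝ) < 1)
      exact ⟨n, le_of_lt (lt_of_le_of_lt (pow_le_pow_of_le_one (by norm_num) (by norm_num)
        (Nat.le_succ n)) hn)⟩
    classical
    let k := Nat.find hex
    refine Set.mem_iUnion.mpr ⟨k, ?_, ?_⟩
    · simp only [mem_ball, dist_zero_right]
      rcases Nat.eq_zero_or_pos k with hk | hk
      · simpa [hk] using hlt
      · have := Nat.find_min hex (m := k - 1) (by omega)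
        push_neg at this
        have hk1 : k - 1 + 1 = k := by omega
        simpa [hk1] using this
    · simp only [mem_ball, dist_zero_right, not_lt]
      exact Nat.find_spec hex
  have hterm : ∀ k : ℕ, ∫⁻ y in S k, w y ∂volume ≤
      (ENNReal.ofReal ((1/2 : ℝ) ^ (α - d)) * volume (ball (0 : E) 1)) *
        (ENNReal.ofReal ((1/2 : ℝ) ^ α)) ^ k := by
    intro k
    have hb : ∀ y ∈ S k, w y ≤ ENNReal.ofReal (((1/2 : ℝ) ^ (k+1)) ^ (α - d)) := by
      intro y hy
      rcases hy with ⟨_, hy2⟩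
      have h2 : (1/2 : ℝ) ^ (k+1) ≤ ‖y‖ := by
        simpa [mem_ball, dist_zero_right, not_lt] using hy2
      exact ENNReal.ofReal_le_ofReal
        (Real.rpow_le_rpow_of_nonpos (by positivity) h2 (by linarith))
    calc ∫⁻ y in S k, w y ∂volume
        ≤ ∫⁻ _ in S k, ENNReal.ofReal (((1/2 : ℝ) ^ (k+1)) ^ (α - d)) ∂volume :=
          setLIntegral_mono' (measurableSet_ball.diff measurableSet_ball) hb
      _ = ENNReal.ofReal (((1/2 : ℝ) ^ (k+1)) ^ (α - d)) * volume (S k) := by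
          rw [setLIntegral_const]
      _ ≤ ENNReal.ofReal (((1/2 : ℝ) ^ (k+1)) ^ (α - d)) * volume (ball (0 : E) ((1/2:ℝ)^k)) :=
          mul_le_mul_right (measure_mono Set.diff_subset) _
      _ = ENNReal.ofReal (((1/2 : ℝ) ^ (k+1)) ^ (α - d)) *
            (ENNReal.ofReal (((1/2:ℝ)^k) ^ d) * volume (ball (0 : E) 1)) := by
          rw [Measure.addHaar_ball _ _ (by positivity), finrank_euclideanSpace, Fintype.card_fin]
      _ = (ENNReal.ofReal ((1/2 : ℝ) ^ (α - d)) * volume (ball (0 : E) 1)) *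
            (ENNReal.ofReal ((1/2 : ℝ) ^ α)) ^ k := by
          have hhalf : (0:ℝ) < 1/2 := by norm_num
          rw [← ENNReal.ofReal_pow (by positivity), ← mul_assoc,
            ← ENNReal.ofReal_mul (by positivity)]
          have hreal : ((1/2:ℝ)^(k+1))^(α-(d:ℝ)) * ((1/2:ℝ)^k)^d
              = (1/2:ℝ)^(α-(d:ℝ)) * ((1/2:ℝ)^α)^k := by
            rw [← Real.rpow_natCast ((1/2:ℝ)) (k+1), ← Real.rpow_mul hhalf.le,
              ← pow_mul, ← Real.rpow_natCast ((1/2:ℝ)) (k*d),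
              ← Real.rpow_natCast ((1/2:ℝ)^α) k, ← Real.rpow_mul hhalf.le,
              ← Real.rpow_add hhalf, ← Real.rpow_add hhalf]
            congr 1
            push_cast
            ring
          rw [hreal, ENNReal.ofReal_mul (by positivity)]
          ring
  calc ∫⁻ y in ball (0 : E) 1, w y ∂volume
      ≤ ∫⁻ y in ({0} ∪ ⋃ k, S k : Set E), w y ∂volume :=
        lintegral_mono_set hcover
    _ ≤ ∫⁻ y in ({0} : Set E), w y ∂volume + ∫⁻ y in (⋃ k, S k), w y ∂volume :=
        lintegral_union_le _ _ _
    _ ≤ 0 + ∑' k, ∫⁻ y in S k, w y ∂volume := by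
        gcongr
        · have : volume ({0} : Set E) = 0 := measure_singleton 0
          rw [setLIntegral_measure_zero _ _ this]
        · exact lintegral_iUnion_le _ _
    _ ≤ 0 + ∑' k, (ENNReal.ofReal ((1/2 : ℝ) ^ (α - d)) * volume (ball (0 : E) 1)) *
          (ENNReal.ofReal ((1/2 : ℝ) ^ α)) ^ k := by gcongr; exact hterm _
    _ < ∞ := by
        rw [zero_add, ENNReal.tsum_mul_left, ENNReal.tsum_geometric]
        refine ENNReal.mul_lt_top (ENNReal.mul_lt_top ofReal_lt_top measure_ball_lt_top) ?_
        rw [ENNReal.inv_lt_top]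
        rw [tsub_pos_iff_lt]
        exact ENNReal.ofReal_lt_one.mpr (Real.rpow_lt_one (by norm_num) (by norm_num) hα0)

lemma ball_scale (d : ℕ) (hd : 0 < d) (α : ℝ) {R : ℝ} (hR : 0 < R) :
    ∫⁻ y in ball (0 : EuclideanSpace ℝ (Fin d)) R, ENNReal.ofReal (‖y‖ ^ (α - (d : ℝ)))
      = ENNReal.ofReal (R ^ α) *
        ∫⁻ y in ball (0 : EuclideanSpace ℝ (Fin d)) 1, ENNReal.ofReal (‖y‖ ^ (α - (d : ℝ))) := by
  haveI : NeZero d := ⟨hd.ne'⟩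
  set E := EuclideanSpace ℝ (Fin d)
  set w : E → ℝ≥0∞ := fun y => ENNReal.ofReal (‖y‖ ^ (α - (d : ℝ))) with hw
  have hwm : Measurable w := (measurable_norm.pow_const _).ennreal_ofReal
  set f : E → ℝ≥0∞ := (ball (0:E) R).indicator w with hf
  have hfm : Measurable f := hwm.indicator measurableSet_ball
  have hmap := Measure.map_addHaar_smul (volume : Measure E) (r := R) hR.ne'
  have hcomp : ∫⁻ z, f (R • z) ∂volume
      = ENNReal.ofReal ((R ^ d)⁻¹) * ∫⁻ y, f y ∂volume := by
    rw [← lintegral_map hfm (measurable_const_smul R), hmap, lintegral_smul_measure]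
    congr 1
    rw [finrank_euclideanSpace, Fintype.card_fin, abs_of_pos (by positivity)]
  have hptw : ∀ z : E, f (R • z) =
      (ball (0:E) 1).indicator (fun z => ENNReal.ofReal (R ^ (α - (d:ℝ))) * w z) z := by
    intro z
    have hmem : R • z ∈ ball (0:E) R ↔ z ∈ ball (0:E) 1 := by
      simp only [mem_ball, dist_zero_right, norm_smul, Real.norm_eq_abs, abs_of_pos hR]
      constructor
      · intro h; nlinarith
      · intro h; nlinarith
    by_cases hz : z ∈ ball (0:E) 1
    · rw [Set.indicator_of_mem hz, hf, Set.indicator_of_mem (hmem.mpr hz), hw]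
      simp only [norm_smul, Real.norm_eq_abs, abs_of_pos hR]
      rw [Real.mul_rpow hR.le (norm_nonneg z), ENNReal.ofReal_mul (by positivity)]
    · rw [Set.indicator_of_notMem hz, hf, Set.indicator_of_notMem (fun h => hz (hmem.mp h))]
  have hone : ∫⁻ z, f (R • z) ∂volume = ENNReal.ofReal (R ^ (α - (d:ℝ))) *
      ∫⁻ y in ball (0:E) 1, w y ∂volume := by
    simp only [hptw]
    rw [lintegral_indicator measurableSet_ball, lintegral_const_mul _ hwm]
  have hJR : ∫⁻ y in ball (0:E) R, w y ∂volume = ∫⁻ y, f y ∂volume :=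
    (lintegral_indicator measurableSet_ball _).symm
  have hRd : ENNReal.ofReal (R ^ d) * ENNReal.ofReal ((R ^ d)⁻¹) = 1 := by
    rw [← ENNReal.ofReal_mul (by positivity), mul_inv_cancel₀ (by positivity)]
    exact ENNReal.ofReal_one
  calc ∫⁻ y in ball (0:E) R, w y ∂volume
      = (ENNReal.ofReal (R ^ d) * ENNReal.ofReal ((R ^ d)⁻¹)) * ∫⁻ y, f y ∂volume := by
        rw [hRd, one_mul, hJR]
    _ = ENNReal.ofReal (R ^ d) * ∫⁻ z, f (R • z) ∂volume := by rw [mul_assoc, ← hcomp]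
    _ = ENNReal.ofReal (R ^ d) * (ENNReal.ofReal (R ^ (α - (d:ℝ))) *
          ∫⁻ y in ball (0:E) 1, w y ∂volume) := by rw [hone]
    _ = ENNReal.ofReal (R ^ α) * ∫⁻ y in ball (0:E) 1, w y ∂volume := by
        rw [← mul_assoc, ← ENNReal.ofReal_mul (by positivity)]
        congr 2
        rw [← Real.rpow_natCast R d, ← Real.rpow_add hR]
        congr 1
        ring

/-- The bilinear fractional integral operator
`I_α^θ(f,g)(x) = ∫_{ℝ^d} f(x + (θ−1)y) g(x + θy) |y|^{α−d} dy`. -/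
noncomputable def Iop (d : ℕ) (α θ : ℝ)
    (f g : EuclideanSpace ℝ (Fin d) → ℝ≥0∞) (x : EuclideanSpace ℝ (Fin d)) : ℝ≥0∞ :=
  ∫⁻ y : EuclideanSpace ℝ (Fin d),
    f (x + (θ - 1) • y) * g (x + θ • y) * ENNReal.ofReal (‖y‖ ^ (α - (d : ℝ)))

/-- The weak `L^r` quasi-norm `sup_{λ > 0} λ · |{x : h x > λ}|^{1/r}`. -/
noncomputable def wLp (d : ℕ) (r : ℝ)
    (h : EuclideanSpace ℝ (Fin d) → ℝ≥0∞) : ℝ≥0∞ :=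
  ⨆ (lam : ℝ) (_ : 0 < lam),
    ENNReal.ofReal lam * (volume {x | ENNReal.ofReal lam < h x}) ^ (1 / r)

theorem stmt10 (d : ℕ) (α : ℝ) (hα0 : 0 < α) (hαd : α < d) :
    ∃ c₂ : ℝ, 0 < c₂ ∧
      ∀ θ : ℝ, θ ∈ Set.Icc (0 : ℝ) 1 →
        ∀ A B : Set (EuclideanSpace ℝ (Fin d)),
          MeasurableSet A → MeasurableSet B → volume A < ∞ → volume B < ∞ →
          wLp d (1 : ℝ) (Iop d α θ (A.indicator 1) (B.indicator 1)) ≤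
            ENNReal.ofReal c₂ * volume A * (volume B) ^ (α / (d : ℝ)) := by
  have hdR : (0:ℝ) < d := hα0.trans hαd
  have hd : 0 < d := by exact_mod_cast hdR
  set E := EuclideanSpace ℝ (Fin d)
  set w : E → ℝ≥0∞ := fun y => ENNReal.ofReal (‖y‖ ^ (α - (d : ℝ))) with hw
  have hwm : Measurable w := (measurable_norm.pow_const _).ennreal_ofReal
  set J : ℝ≥0∞ := ∫⁻ y in ball (0:E) 1, w y with hJdef
  have hJ : J < ∞ := ball_finite d hd α hα0 hαd
  refine ⟨(J + 1).toReal, ?_, ?_⟩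
  · refine ENNReal.toReal_pos ?_ (by finiteness)
    simp
  have hc : ENNReal.ofReal ((J + 1).toReal) = J + 1 :=
    ENNReal.ofReal_toReal (by finiteness)
  intro θ _ A B hA hB hAfin hBfin
  have hIndA : Measurable (A.indicator (1 : E → ℝ≥0∞)) := measurable_one.indicator hA
  have hIndB : Measurable (B.indicator (1 : E → ℝ≥0∞)) := measurable_one.indicator hB
  -- kernel measurability
  set K : E × E → ℝ≥0∞ := fun p =>
    A.indicator (1 : E → ℝ≥0∞) (p.1 + (θ - 1) • p.2) * B.indicator (1 : E → ℝ≥0∞) (p.1 + θ • p.2) * w p.2 with hK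
  have hKm : Measurable K := by
    refine Measurable.mul (Measurable.mul ?_ ?_) (hwm.comp measurable_snd)
    · exact hIndA.comp (measurable_fst.add (measurable_snd.const_smul (θ - 1)))
    · exact hIndB.comp (measurable_fst.add (measurable_snd.const_smul θ))
  set h : E → ℝ≥0∞ := Iop d α θ (A.indicator (1 : E → ℝ≥0∞)) (B.indicator (1 : E → ℝ≥0∞)) with hhdef
  have hh : Measurable h := hKm.lintegral_prod_right'
  -- Chebyshev
  have cheb : wLp d 1 h ≤ ∫⁻ x, h x := by
    rw [wLp]
    refine iSup_le fun lam => iSup_le fun _ => ?_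
    rw [show (1:ℝ)/1 = 1 by norm_num, ENNReal.rpow_one]
    have hsub : volume {x | ENNReal.ofReal lam < h x} ≤ volume {x | ENNReal.ofReal lam ≤ h x} :=
      measure_mono fun x (hx : ENNReal.ofReal lam < h x) => (le_of_lt hx : ENNReal.ofReal lam ≤ h x)
    exact le_trans (mul_le_mul_right hsub _) (mul_meas_ge_le_lintegral₀ hh.aemeasurable _)
  -- m y : measure of A ∩ (·+y)⁻¹' B
  set m : E → ℝ≥0∞ := fun y => volume (A ∩ (fun u => u + y) ⁻¹' B) with hm
  have hg : ∀ y, ∀ u : E, A.indicator (1 : E → ℝ≥0∞) u * B.indicator (1 : E → ℝ≥0∞) (u + y)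
      = (A ∩ (fun u => u + y) ⁻¹' B).indicator (1 : E → ℝ≥0∞) u := by
    intro y u
    by_cases h1 : u ∈ A <;> by_cases h2 : u + y ∈ B <;>
      simp [Set.indicator_apply, h1, h2]
  have hmSet : ∀ y : E, MeasurableSet (A ∩ (fun u : E => u + y) ⁻¹' B) :=
    fun y => hA.inter (hB.preimage (measurable_add_const y))
  have hgint : ∀ y : E, ∫⁻ u, A.indicator (1 : E → ℝ≥0∞) u * B.indicator (1 : E → ℝ≥0∞) (u + y) = m y := by
    intro y
    simp only [hg y]
    exact lintegral_indicator_one (hmSet y)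
  -- inner x-integral
  have inner : ∀ y : E, ∫⁻ x, K (x, y) = m y * w y := by
    intro y
    have hmul : ∀ x : E, K (x, y) =
        (A.indicator (1 : E → ℝ≥0∞) (x + (θ - 1) • y) * B.indicator (1 : E → ℝ≥0∞) (x + θ • y)) * w y := fun _ => rfl
    simp only [hmul]
    have hmx : Measurable fun x : E =>
        A.indicator (1 : E → ℝ≥0∞) (x + (θ - 1) • y) * B.indicator (1 : E → ℝ≥0∞) (x + θ • y) := by
      exact (hIndA.comp (measurable_add_const _)).mul (hIndB.comp (measurable_add_const _))
    rw [lintegral_mul_const _ hmx]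
    congr 1
    have key : ∀ x : E, A.indicator (1 : E → ℝ≥0∞) (x + (θ - 1) • y) * B.indicator (1 : E → ℝ≥0∞) (x + θ • y)
        = (fun u => A.indicator (1 : E → ℝ≥0∞) u * B.indicator (1 : E → ℝ≥0∞) (u + y)) (x + (θ - 1) • y) := by
      intro x
      have hy : (θ - 1) • y + y = θ • y := by
        rw [sub_smul, one_smul, sub_add_cancel]
      simp only []
      rw [add_assoc, hy]
    simp only [key]
    rw [lintegral_add_right_eq_self (fun u => A.indicator (1 : E → ℝ≥0∞) u * B.indicator (1 : E → ℝ≥0∞) (u + y))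
      ((θ - 1) • y)]
    exact hgint y
  have swap1 : ∫⁻ x, h x = ∫⁻ y, m y * w y := by
    have : ∫⁻ x, h x = ∫⁻ x, ∫⁻ y, K (x, y) := rfl
    rw [this, lintegral_lintegral_swap hKm.aemeasurable]
    exact lintegral_congr inner
  -- total mass of m
  have hmtot : ∫⁻ y, m y = volume A * volume B := by
    have h1 : ∫⁻ y, m y = ∫⁻ y, ∫⁻ u, A.indicator (1 : E → ℝ≥0∞) u * B.indicator (1 : E → ℝ≥0∞) (u + y) :=
      lintegral_congr fun y => (hgint y).symm
    rw [h1, lintegral_lintegral_swap]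
    · have h2 : ∀ u : E, ∫⁻ y, A.indicator (1 : E → ℝ≥0∞) u * B.indicator (1 : E → ℝ≥0∞) (u + y)
          = A.indicator (1 : E → ℝ≥0∞) u * volume B := by
        intro u
        have hmy : Measurable fun z : E => B.indicator (1 : E → ℝ≥0∞) (u + z) := by
          exact hIndB.comp (measurable_const_add u)
        rw [lintegral_const_mul _ hmy]
        congr 1
        rw [lintegral_add_left_eq_self (B.indicator (1 : E → ℝ≥0∞)) u]
        exact lintegral_indicator_one hB
      simp only [h2]
      rw [lintegral_mul_const _ hIndA, lintegral_indicator_one hA]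
    · exact ((hIndA.comp measurable_snd).mul
        (hIndB.comp (measurable_snd.add measurable_fst))).aemeasurable
  have hmA : ∀ y, m y ≤ volume A := fun y => measure_mono Set.inter_subset_left
  have hmB : ∀ y, m y ≤ volume B := by
    intro y
    refine le_trans (measure_mono Set.inter_subset_right) ?_
    exact le_of_eq (measure_preimage_add_right volume y B)
  rcases eq_or_ne (volume B) 0 with hB0 | hB0
  · -- trivial case
    have : ∫⁻ y, m y * w y = 0 := by
      have : ∀ y, m y * w y = 0 := by
        intro y
        have := hmB y
        rw [hB0] at this
        simp [le_antisymm this zero_le]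
      simp [this]
    refine le_trans cheb ?_
    rw [swap1, this]
    exact zero_le
  -- main case
  set b := (volume B).toReal with hbdef
  have hb : 0 < b := ENNReal.toReal_pos hB0 hBfin.ne
  set R : ℝ := b ^ ((d:ℝ))⁻¹ with hRdef
  have hR : 0 < R := Real.rpow_pos_of_pos hb _
  have hRd : R ^ ((d:ℝ)) = b := by
    rw [hRdef, ← Real.rpow_mul hb.le, inv_mul_cancel₀ (ne_of_gt hdR), Real.rpow_one]
  have hRα : ENNReal.ofReal (R ^ α) = (volume B) ^ (α / (d:ℝ)) := by
    rw [hRdef, ← Real.rpow_mul hb.le]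
    rw [show ((d:ℝ))⁻¹ * α = α / d by ring]
    rw [← ENNReal.ofReal_rpow_of_pos hb, ENNReal.ofReal_toReal hBfin.ne]
  -- split the integral
  have hsplit : ∫⁻ y, m y * w y = (∫⁻ y in ball (0:E) R, m y * w y)
      + ∫⁻ y in (ball (0:E) R)ᶜ, m y * w y :=
    (lintegral_add_compl _ measurableSet_ball).symm
  have bound1 : ∫⁻ y in ball (0:E) R, m y * w y
      ≤ volume A * ((volume B) ^ (α / (d:ℝ)) * J) := by
    calc ∫⁻ y in ball (0:E) R, m y * w y
        ≤ ∫⁻ y in ball (0:E) R, volume A * w y :=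
          setLIntegral_mono' measurableSet_ball fun y _ =>
            mul_le_mul_left (hmA y) _
      _ = volume A * ∫⁻ y in ball (0:E) R, w y := lintegral_const_mul _ hwm
      _ = volume A * (ENNReal.ofReal (R ^ α) * J) := by
          rw [ball_scale d hd α hR]
      _ = volume A * ((volume B) ^ (α / (d:ℝ)) * J) := by rw [hRα]
  have bound2 : ∫⁻ y in (ball (0:E) R)ᶜ, m y * w y
      ≤ volume A * (volume B) ^ (α / (d:ℝ)) := by
    have hwle : ∀ y : E, y ∈ (ball (0:E) R)ᶜ → w y ≤ ENNReal.ofReal (R ^ (α - (d:ℝ))) := by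
      intro y hy
      have hRy : R ≤ ‖y‖ := by
        simpa [mem_ball, dist_zero_right, not_lt] using hy
      exact ENNReal.ofReal_le_ofReal
        (Real.rpow_le_rpow_of_nonpos hR hRy (by linarith))
    calc ∫⁻ y in (ball (0:E) R)ᶜ, m y * w y
        ≤ ∫⁻ y in (ball (0:E) R)ᶜ, ENNReal.ofReal (R ^ (α - (d:ℝ))) * m y :=
          setLIntegral_mono' measurableSet_ball.compl fun y hy => by
            rw [mul_comm]; exact mul_le_mul_left (hwle y hy) _
      _ ≤ ∫⁻ y, ENNReal.ofReal (R ^ (α - (d:ℝ))) * m y := setLIntegral_le_lintegral _ _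
      _ = ENNReal.ofReal (R ^ (α - (d:ℝ))) * (volume A * volume B) := by
          rw [lintegral_const_mul' _ _ ENNReal.ofReal_ne_top, hmtot]
      _ = volume A * (ENNReal.ofReal (R ^ (α - (d:ℝ))) * volume B) := by ring
      _ = volume A * (volume B) ^ (α / (d:ℝ)) := by
          congr 1
          have h1 : ENNReal.ofReal (R ^ (α - (d:ℝ))) * volume B
              = ENNReal.ofReal (R ^ α) := by
            conv_lhs => rw [← ENNReal.ofReal_toReal hBfin.ne]
            rw [← hbdef, ← ENNReal.ofReal_mul (by positivity)]
            congr 1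
            rw [← hRd, ← Real.rpow_add hR]
            congr 1
            ring
          rw [h1, hRα]
  calc wLp d 1 h ≤ ∫⁻ x, h x := cheb
    _ = ∫⁻ y, m y * w y := swap1
    _ ≤ volume A * ((volume B) ^ (α / (d:ℝ)) * J) + volume A * (volume B) ^ (α / (d:ℝ)) := by
        rw [hsplit]; exact add_le_add bound1 bound2
    _ = (J + 1) * volume A * (volume B) ^ (α / (d:ℝ)) := by ring
    _ = ENNReal.ofReal ((J + 1).toReal) * volume A * (volume B) ^ (α / (d:ℝ)) := by rw [hc]
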